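/- Define f(t) = 2·∫₀^t (t − y)(e^{−y} − 1 + y)·y^{−2} dy for t ≥ 0. Then f(t) = 2t·ln t − (4 − 2γ)t + 2·ln t + (2γ + 2) + O(e^{−t}·t^{−2}) as t → ∞, where γ is the Euler–Mascheroni constant. -/

import Mathlib

open Filter Asymptotics Real intervalIntegral MeasureTheory Set

noncomputable def Ee (t : ℝ) : ℝ := ∫ y in Set.Ioi t, Real.exp (-y) / y

-- basic inequalities
lemma expq_nonneg (y : ℝ) : 0 ≤ Real.exp (-y) - 1 + y := by
  have := Real.add_one_le_exp (-y); linarith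

lemma one_sub_exp_le (y : ℝ) : 1 - Real.exp (-y) ≤ y := by
  have := Real.add_one_le_exp (-y); linarith

lemma expq_le {y : ℝ} (hy : 0 ≤ y) : Real.exp (-y) - 1 + y ≤ y ^ 2 / 2 := by
  have key : MonotoneOn (fun y : ℝ => y ^ 2 / 2 - (Real.exp (-y) - 1 + y)) (Set.Ici 0) := by
    apply monotoneOn_of_hasDerivWithinAt_nonneg (convex_Ici 0)
      (Continuous.continuousOn (by continuity))
      (f' := fun y => y - (-Real.exp (-y) + 1))
    · intro x hx
      have h1 : HasDerivAt (fun y : ℝ => Real.exp (-y)) (-Real.exp (-x)) x := by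
        simpa [Function.comp_def] using (Real.hasDerivAt_exp (-x)).comp x (hasDerivAt_neg x)
      have h2 : HasDerivAt (fun y : ℝ => y ^ 2 / 2 - (Real.exp (-y) - 1 + y))
          (2 * x ^ 1 / 2 - (-Real.exp (-x) + 1)) x :=
        ((hasDerivAt_pow 2 x).div_const 2).sub ((h1.sub_const 1).add (hasDerivAt_id x))
      simpa using h2.hasDerivWithinAt
    · intro x hx
      have := Real.add_one_le_exp (-x)
      rw [interior_Ici] at hx
      have hx0 : (0:ℝ) < x := hx
      linarith
  have h0 := key (Set.self_mem_Ici) (by exact hy) hy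
  simp at h0
  linarith

-- integrability of bounded measurable functions on bounded intervals
lemma II_of_bounded {f : ℝ → ℝ} (hm : Measurable f) {a b C : ℝ} (hab : a ≤ b)
    (h : ∀ y ∈ Set.Ioc a b, ‖f y‖ ≤ C) : IntervalIntegrable f volume a b := by
  rw [intervalIntegrable_iff_integrableOn_Ioc_of_le hab]
  apply Measure.integrableOn_of_bounded (M := C)
  · exact ((measure_Ioc_lt_top).ne)
  · exact hm.aestronglyMeasurable
  · exact (ae_restrict_iff' measurableSet_Ioc).2 (Filter.Eventually.of_forall h)

lemma meas_q2 : Measurable (fun y : ℝ => (Real.exp (-y) - 1 + y) / y ^ 2) := by fun_prop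
lemma meas_q1 : Measurable (fun y : ℝ => (Real.exp (-y) - 1 + y) / y) := by fun_prop
lemma meas_p : Measurable (fun y : ℝ => (1 - Real.exp (-y)) / y) := by fun_prop
lemma meas_e1 : Measurable (fun y : ℝ => Real.exp (-y) / y) := by fun_prop
lemma meas_e2 : Measurable (fun y : ℝ => Real.exp (-y) / y ^ 2) := by fun_prop
lemma meas_e3 : Measurable (fun y : ℝ => Real.exp (-y) / y ^ 3) := by fun_prop

lemma II_q2 {a b : ℝ} (hab : a ≤ b) (ha : 0 ≤ a) :
    IntervalIntegrable (fun y : ℝ => (Real.exp (-y) - 1 + y) / y ^ 2) volume a b := by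
  apply II_of_bounded meas_q2 hab (C := 1/2)
  intro y hy
  have hy0 : 0 < y := lt_of_le_of_lt ha hy.1
  rw [Real.norm_of_nonneg (div_nonneg (expq_nonneg y) (by positivity))]
  rw [div_le_iff₀ (by positivity)]
  have := expq_le hy0.le
  linarith

lemma II_q1 {a b : ℝ} (hab : a ≤ b) (ha : 0 ≤ a) :
    IntervalIntegrable (fun y : ℝ => (Real.exp (-y) - 1 + y) / y) volume a b := by
  apply II_of_bounded meas_q1 hab (C := b/2)
  intro y hy
  have hy0 : 0 < y := lt_of_le_of_lt ha hy.1
  rw [Real.norm_of_nonneg (div_nonneg (expq_nonneg y) hy0.le)]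
  rw [div_le_iff₀ hy0]
  have h1 := expq_le hy0.le
  have h2 : y ^ 2 / 2 ≤ b / 2 * y := by nlinarith [hy.2, hy0]
  linarith

lemma II_p {a b : ℝ} (hab : a ≤ b) (ha : 0 ≤ a) :
    IntervalIntegrable (fun y : ℝ => (1 - Real.exp (-y)) / y) volume a b := by
  apply II_of_bounded meas_p hab (C := 1)
  intro y hy
  have hy0 : 0 < y := lt_of_le_of_lt ha hy.1
  have h1 : 0 ≤ 1 - Real.exp (-y) := by
    have : Real.exp (-y) ≤ 1 := Real.exp_le_one_iff.2 (by linarith)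
    linarith
  rw [Real.norm_of_nonneg (by positivity), div_le_one hy0]
  have := one_sub_exp_le y; linarith

-- integrable on Ioi a, a > 0, of exp(-y)/y^k
lemma IOn_ek {a : ℝ} (ha : 0 < a) (k : ℕ) :
    IntegrableOn (fun y : ℝ => Real.exp (-y) / y ^ k) (Set.Ioi a) := by
  have hg : IntegrableOn (fun y : ℝ => Real.exp (-y) / a ^ k) (Set.Ioi a) := by
    have := (exp_neg_integrableOn_Ioi a (b := 1) one_pos)
    simpa [neg_mul, one_mul, IntegrableOn] using this.div_const (a ^ k)
  apply Integrable.mono' hg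
  · exact (Measurable.aestronglyMeasurable (by fun_prop))
  · refine (ae_restrict_iff' measurableSet_Ioi).2 (Filter.Eventually.of_forall ?_)
    intro y hy
    have hy0 : 0 < y := lt_trans ha hy
    rw [Real.norm_of_nonneg (by positivity)]
    apply div_le_div_of_nonneg_left (Real.exp_pos _).le (by positivity)
    exact pow_le_pow_left₀ ha.le (le_of_lt hy) k

lemma IOn_e1 {a : ℝ} (ha : 0 < a) : IntegrableOn (fun y : ℝ => Real.exp (-y) / y) (Set.Ioi a) := by
  simpa using IOn_ek ha 1

-- two functions with equal derivative on Ioi 0 differ by a constant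
lemma eq_of_deriv_eq_at {F G D : ℝ → ℝ} (hF : ∀ t, 0 < t → HasDerivAt F (D t) t)
    (hG : ∀ t, 0 < t → HasDerivAt G (D t) t) {s t : ℝ} (hs : 0 < s) (ht : 0 < t) :
    F t - G t = F s - G s := by
  have key : ∫ _ in s..t, (0:ℝ) = (fun y => F y - G y) t - (fun y => F y - G y) s := by
    apply intervalIntegral.integral_eq_sub_of_hasDerivAt
    · intro y hy
      have hy0 : 0 < y := by
        rcases Set.mem_uIcc.mp hy with h | h
        · linarith [h.1]
        · linarith [h.1]
      exact ((hF y hy0).sub (hG y hy0)).congr_deriv (sub_self _)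
    · exact intervalIntegrable_const
  simp only [intervalIntegral.integral_zero] at key
  linarith [key]

lemma eq_of_deriv_eq_tendsto {F G D : ℝ → ℝ} (hF : ∀ t, 0 < t → HasDerivAt F (D t) t)
    (hG : ∀ t, 0 < t → HasDerivAt G (D t) t)
    (hlim : Tendsto (fun t => F t - G t) (nhdsWithin 0 (Set.Ioi 0)) (nhds 0))
    {t : ℝ} (ht : 0 < t) : F t = G t := by
  have h2 : Tendsto (fun s => F s - G s) (nhdsWithin 0 (Set.Ioi 0)) (nhds (F t - G t)) := by
    apply Tendsto.congr' _ (tendsto_const_nhds (α := ℝ))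
    filter_upwards [self_mem_nhdsWithin] with s hs
    exact (eq_of_deriv_eq_at hF hG hs ht)
  have := tendsto_nhds_unique h2 hlim
  linarith

-- FTC: derivative of the primitive from 0
lemma hasDerivAt_primitive_zero {f : ℝ → ℝ} (hm : Measurable f)
    {t : ℝ} (ht : 0 < t) (hInt : IntervalIntegrable f volume 0 t)
    (hc : ContinuousAt f t) :
    HasDerivAt (fun u => ∫ y in (0:ℝ)..u, f y) (f t) t :=
  intervalIntegral.integral_hasDerivAt_right hInt
    (hm.stronglyMeasurable.stronglyMeasurableAtFilter) hc

lemma cont_at_pos {t : ℝ} (ht : 0 < t) {g : ℝ → ℝ} (hg : Continuous g) (n : ℕ) :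
    ContinuousAt (fun y => g y / y ^ n) t :=
  ContinuousAt.div hg.continuousAt (by fun_prop) (by positivity)

-- Ee basic facts
lemma Ee_eq {u : ℝ} (hu : 0 < u) :
    Ee u = Ee 1 - ∫ y in (1:ℝ)..u, Real.exp (-y) / y := by
  rcases le_total 1 u with h | h
  · rw [intervalIntegral.integral_of_le h]
    have hsplit : Ee 1 = (∫ y in Set.Ioc 1 u, Real.exp (-y) / y) + Ee u := by
      rw [Ee, Ee, ← setIntegral_union (Set.Ioc_disjoint_Ioi le_rfl) measurableSet_Ioi
        ((IOn_e1 one_pos).mono_set Set.Ioc_subset_Ioi_self) ((IOn_e1 one_pos).mono_set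
          (Set.Ioi_subset_Ioi h)), Set.Ioc_union_Ioi_eq_Ioi h]
    linarith
  · rw [intervalIntegral.integral_symm, intervalIntegral.integral_of_le h]
    have hsplit : Ee u = (∫ y in Set.Ioc u 1, Real.exp (-y) / y) + Ee 1 := by
      rw [Ee, Ee, ← setIntegral_union (Set.Ioc_disjoint_Ioi le_rfl) measurableSet_Ioi
        ((IOn_e1 hu).mono_set Set.Ioc_subset_Ioi_self) ((IOn_e1 hu).mono_set
          (Set.Ioi_subset_Ioi h)), Set.Ioc_union_Ioi_eq_Ioi h]
    linarith

lemma Ee_hasDeriv {t : ℝ} (ht : 0 < t) : HasDerivAt Ee (-(Real.exp (-t) / t)) t := by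
  have hint : IntervalIntegrable (fun y : ℝ => Real.exp (-y) / y) volume 1 t := by
    apply ContinuousOn.intervalIntegrable
    intro y hy
    have hy0 : 0 < y := by
      rcases Set.mem_uIcc.mp hy with h | h
      · linarith [h.1]
      · linarith [h.1]
    exact ((Real.continuous_exp.comp continuous_neg).continuousAt.div
      continuousAt_id hy0.ne').continuousWithinAt
  have hpr : HasDerivAt (fun u => ∫ y in (1:ℝ)..u, Real.exp (-y) / y) (Real.exp (-t) / t) t :=
    intervalIntegral.integral_hasDerivAt_right hint
      (meas_e1.stronglyMeasurable.stronglyMeasurableAtFilter)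
      (by simpa using cont_at_pos ht (Real.continuous_exp.comp continuous_neg) 1)
  have h2 : HasDerivAt (fun u => Ee 1 - ∫ y in (1:ℝ)..u, Real.exp (-y) / y)
      (-(Real.exp (-t) / t)) t := hpr.const_sub (Ee 1)
  apply h2.congr_of_eventuallyEq
  filter_upwards [isOpen_Ioi.mem_nhds (Set.mem_Ioi.mpr ht)] with u hu
  exact Ee_eq hu

lemma Ee_nonneg {t : ℝ} (ht : 0 < t) : 0 ≤ Ee t := by
  apply setIntegral_nonneg measurableSet_Ioi
  intro y hy
  have : 0 < y := lt_trans ht hy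
  positivity

lemma Ee_le {t : ℝ} (ht : 1 ≤ t) : Ee t ≤ Real.exp (-t) := by
  have h0 : (0:ℝ) < t := lt_of_lt_of_le one_pos ht
  calc Ee t ≤ ∫ y in Set.Ioi t, Real.exp (-y) := by
        apply setIntegral_mono_on (IOn_e1 h0) _ measurableSet_Ioi
        · intro y hy
          exact div_le_self (Real.exp_pos _).le (le_trans ht (le_of_lt hy))
        · simpa [neg_mul, one_mul] using exp_neg_integrableOn_Ioi t (b := 1) one_pos
    _ = Real.exp (-t) := integral_exp_neg_Ioi t

noncomputable def cst : ℝ := (∫ y in (0:ℝ)..1, (1 - Real.exp (-y)) / y) - Ee 1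

lemma logint {t : ℝ} (ht : 0 < t) :
    ∫ y in (0:ℝ)..t, (1 - Real.exp (-y)) / y = Real.log t + cst + Ee t := by
  have hF : ∀ u, 0 < u → HasDerivAt (fun v => ∫ y in (0:ℝ)..v, (1 - Real.exp (-y)) / y)
      ((1 - Real.exp (-u)) / u) u := by
    intro u hu
    exact hasDerivAt_primitive_zero meas_p hu (II_p hu.le le_rfl)
      (ContinuousAt.div (by fun_prop) continuousAt_id hu.ne')
  have hG : ∀ u, 0 < u → HasDerivAt (fun v => Real.log v + cst + Ee v)
      ((1 - Real.exp (-u)) / u) u := by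
    intro u hu
    have h1 := ((Real.hasDerivAt_log hu.ne').add_const cst).add (Ee_hasDeriv hu)
    refine h1.congr_deriv ?_
    field_simp
    ring
  have key := eq_of_deriv_eq_at hF hG (s := 1) (t := t) one_pos ht
  have h1 : Real.log (1:ℝ) + cst + Ee 1 = ∫ y in (0:ℝ)..1, (1 - Real.exp (-y)) / y := by
    rw [Real.log_one, cst]; ring
  simp only [h1.symm] at key
  linarith [key]

lemma int_p_small {s : ℝ} (hs : 0 < s) :
    |∫ y in (0:ℝ)..s, (1 - Real.exp (-y)) / y| ≤ s := by
  have h := intervalIntegral.norm_integral_le_of_norm_le_const (C := 1)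
    (f := fun y => (1 - Real.exp (-y)) / y) (a := 0) (b := s) ?_
  · rw [Real.norm_eq_abs] at h
    simpa [abs_of_pos hs] using h
  · intro y hy
    rw [Set.uIoc_of_le hs.le] at hy
    have hy0 : 0 < y := hy.1
    have h1 : 0 ≤ 1 - Real.exp (-y) := by
      have : Real.exp (-y) ≤ 1 := Real.exp_le_one_iff.2 (by linarith)
      linarith
    rw [Real.norm_of_nonneg (by positivity), div_le_one hy0]
    have := one_sub_exp_le y; linarith

lemma tendsto_logE : Tendsto (fun s => Real.log s + cst + Ee s)
    (nhdsWithin 0 (Set.Ioi 0)) (nhds 0) := by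
  have h1 : Tendsto (fun s => ∫ y in (0:ℝ)..s, (1 - Real.exp (-y)) / y)
      (nhdsWithin 0 (Set.Ioi 0)) (nhds 0) := by
    apply squeeze_zero_norm' _ (tendsto_id.mono_left nhdsWithin_le_nhds)
    filter_upwards [self_mem_nhdsWithin] with s hs
    simpa [Real.norm_eq_abs] using int_p_small (Set.mem_Ioi.mp hs)
  apply h1.congr'
  filter_upwards [self_mem_nhdsWithin] with s hs
  exact logint (Set.mem_Ioi.mp hs)

lemma A_eq {t : ℝ} (ht : 0 < t) :
    ∫ y in (0:ℝ)..t, (Real.exp (-y) - 1 + y) / y ^ 2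
      = Real.log t + cst + Ee t - (Real.exp (-t) - 1 + t) / t := by
  have hF : ∀ u, 0 < u → HasDerivAt (fun v => ∫ y in (0:ℝ)..v, (Real.exp (-y) - 1 + y) / y ^ 2)
      ((Real.exp (-u) - 1 + u) / u ^ 2) u := by
    intro u hu
    exact hasDerivAt_primitive_zero meas_q2 hu (II_q2 hu.le le_rfl)
      (ContinuousAt.div (by fun_prop) (by fun_prop) (by positivity))
  have hG : ∀ u, 0 < u → HasDerivAt
      (fun v => Real.log v + cst + Ee v - (Real.exp (-v) - 1 + v) / v)
      ((Real.exp (-u) - 1 + u) / u ^ 2) u := by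
    intro u hu
    have hnum : HasDerivAt (fun v : ℝ => Real.exp (-v) - 1 + v) (-Real.exp (-u) + 1) u := by
      have h1 : HasDerivAt (fun v : ℝ => Real.exp (-v)) (-Real.exp (-u)) u := by
        simpa [Function.comp_def] using (Real.hasDerivAt_exp (-u)).comp u (hasDerivAt_neg u)
      exact (h1.sub_const 1).add (hasDerivAt_id u)
    have hq : HasDerivAt (fun v : ℝ => (Real.exp (-v) - 1 + v) / v)
        (((-Real.exp (-u) + 1) * u - (Real.exp (-u) - 1 + u) * 1) / u ^ 2) u :=
      hnum.div (hasDerivAt_id u) hu.ne'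
    have h2 := (((Real.hasDerivAt_log hu.ne').add_const cst).add (Ee_hasDeriv hu)).sub hq
    refine h2.congr_deriv ?_
    field_simp
    ring
  apply eq_of_deriv_eq_tendsto hF hG _ ht
  have hFlim : Tendsto (fun s => ∫ y in (0:ℝ)..s, (Real.exp (-y) - 1 + y) / y ^ 2)
      (nhdsWithin 0 (Set.Ioi 0)) (nhds 0) := by
    apply squeeze_zero_norm' _ (tendsto_id.mono_left nhdsWithin_le_nhds)
    filter_upwards [self_mem_nhdsWithin] with s hs
    have hs0 : (0:ℝ) < s := hs
    have h := intervalIntegral.norm_integral_le_of_norm_le_const (C := 1)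
      (f := fun y => (Real.exp (-y) - 1 + y) / y ^ 2) (a := 0) (b := s) ?_
    · rw [Real.norm_eq_abs] at h
      simpa [abs_of_pos hs0] using h
    · intro y hy
      rw [Set.uIoc_of_le hs0.le] at hy
      have hy0 : 0 < y := hy.1
      rw [Real.norm_of_nonneg (div_nonneg (expq_nonneg y) (by positivity)),
        div_le_one (by positivity)]
      have h1 := expq_le hy0.le
      nlinarith [sq_nonneg y, hy0]
  have hq : Tendsto (fun s : ℝ => (Real.exp (-s) - 1 + s) / s)
      (nhdsWithin 0 (Set.Ioi 0)) (nhds 0) := by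
    apply squeeze_zero_norm' _ (tendsto_id.mono_left nhdsWithin_le_nhds)
    filter_upwards [self_mem_nhdsWithin] with s hs
    have hs0 : (0:ℝ) < s := hs
    simp only [id_eq]
    rw [Real.norm_of_nonneg (div_nonneg (expq_nonneg s) hs0.le), div_le_iff₀ hs0]
    have h1 := expq_le hs0.le
    nlinarith [sq_nonneg s]
  have := hFlim.sub (tendsto_logE.sub hq)
  simpa using this

lemma B_eq {t : ℝ} (ht : 0 < t) :
    ∫ y in (0:ℝ)..t, (Real.exp (-y) - 1 + y) / y
      = t - (Real.log t + cst + Ee t) := by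
  have hcongr : ∫ y in (0:ℝ)..t, (Real.exp (-y) - 1 + y) / y
      = ∫ y in (0:ℝ)..t, ((1:ℝ) - (1 - Real.exp (-y)) / y) := by
    apply intervalIntegral.integral_congr_ae
    have h0 : ∀ᵐ (x : ℝ), x ≠ (0:ℝ) := by
      rw [MeasureTheory.ae_iff]
      simpa using measure_singleton (0:ℝ)
    filter_upwards [h0] with x hx _
    field_simp
    ring
  rw [hcongr, intervalIntegral.integral_sub intervalIntegrable_const (II_p ht.le le_rfl),
    logint ht]
  simp

lemma f_eq {t : ℝ} (ht : 0 < t) :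
    2 * ∫ y in (0:ℝ)..t, (t - y) * (Real.exp (-y) - 1 + y) / y ^ 2
      = (2 * t * Real.log t - (4 - 2 * cst) * t + 2 * Real.log t + (2 * cst + 2))
        + (2 * (t + 1) * Ee t - 2 * Real.exp (-t)) := by
  have hcongr : ∫ y in (0:ℝ)..t, (t - y) * (Real.exp (-y) - 1 + y) / y ^ 2
      = ∫ y in (0:ℝ)..t,
          (t * ((Real.exp (-y) - 1 + y) / y ^ 2) - (Real.exp (-y) - 1 + y) / y) := by
    apply intervalIntegral.integral_congr_ae
    have h0 : ∀ᵐ (x : ℝ), x ≠ (0:ℝ) := by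
      rw [MeasureTheory.ae_iff]
      simpa using measure_singleton (0:ℝ)
    filter_upwards [h0] with x hx _
    field_simp
  rw [hcongr, intervalIntegral.integral_sub ((II_q2 ht.le le_rfl).const_mul t)
    (II_q1 ht.le le_rfl), intervalIntegral.integral_const_mul, A_eq ht, B_eq ht]
  have hdiv : t * ((Real.exp (-t) - 1 + t) / t) = Real.exp (-t) - 1 + t := by
    field_simp
  ring_nf
  ring_nf at hdiv
  nlinarith [hdiv]

lemma E_ibp1 {t : ℝ} (ht : 0 < t) :
    Ee t = Real.exp (-t) / t - ∫ y in Set.Ioi t, Real.exp (-y) / y ^ 2 := by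
  have hderiv : ∀ x ∈ Set.Ici t, HasDerivAt (fun y => -(Real.exp (-y) / y))
      (Real.exp (-x) / x + Real.exp (-x) / x ^ 2) x := by
    intro x hx
    have hx0 : 0 < x := lt_of_lt_of_le ht hx
    have hnum : HasDerivAt (fun y : ℝ => Real.exp (-y)) (-Real.exp (-x)) x := by
      simpa [Function.comp_def] using (Real.hasDerivAt_exp (-x)).comp x (hasDerivAt_neg x)
    have h := (hnum.div (hasDerivAt_id x) hx0.ne').neg
    refine h.congr_deriv ?_
    simp only [id]
    field_simp
    ring
  have htend : Tendsto (fun y => -(Real.exp (-y) / y)) atTop (nhds 0) := by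
    have h1 : Tendsto (fun y : ℝ => Real.exp (-y) * y⁻¹) atTop (nhds (0 * 0)) :=
      Tendsto.mul Real.tendsto_exp_neg_atTop_nhds_zero tendsto_inv_atTop_zero
    simp only [mul_zero] at h1
    have : Tendsto (fun y : ℝ => Real.exp (-y) / y) atTop (nhds 0) := by
      simpa [div_eq_mul_inv] using h1
    simpa using this.neg
  have key := integral_Ioi_of_hasDerivAt_of_tendsto' hderiv
    (((IOn_e1 ht).add (IOn_ek ht 2))) htend
  rw [integral_add (IOn_e1 ht) (IOn_ek ht 2)] at key
  have : Ee t = ∫ y in Set.Ioi t, Real.exp (-y) / y := rfl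
  rw [this]
  linarith [key]

lemma E_ibp2 {t : ℝ} (ht : 0 < t) :
    ∫ y in Set.Ioi t, Real.exp (-y) / y ^ 2
      = Real.exp (-t) / t ^ 2 - 2 * ∫ y in Set.Ioi t, Real.exp (-y) / y ^ 3 := by
  have hderiv : ∀ x ∈ Set.Ici t, HasDerivAt (fun y => -(Real.exp (-y) / y ^ 2))
      (Real.exp (-x) / x ^ 2 + 2 * (Real.exp (-x) / x ^ 3)) x := by
    intro x hx
    have hx0 : 0 < x := lt_of_lt_of_le ht hx
    have hnum : HasDerivAt (fun y : ℝ => Real.exp (-y)) (-Real.exp (-x)) x := by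
      simpa [Function.comp_def] using (Real.hasDerivAt_exp (-x)).comp x (hasDerivAt_neg x)
    have h := (hnum.div (hasDerivAt_pow 2 x) (by positivity)).neg
    refine h.congr_deriv ?_
    field_simp
    ring
  have htend : Tendsto (fun y => -(Real.exp (-y) / y ^ 2)) atTop (nhds 0) := by
    have h1 : Tendsto (fun y : ℝ => Real.exp (-y) * (y ^ 2)⁻¹) atTop (nhds (0 * 0)) :=
      Tendsto.mul Real.tendsto_exp_neg_atTop_nhds_zero
        (Tendsto.inv_tendsto_atTop (tendsto_pow_atTop two_ne_zero))
    simp only [mul_zero] at h1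
    have : Tendsto (fun y : ℝ => Real.exp (-y) / y ^ 2) atTop (nhds 0) := by
      simpa [div_eq_mul_inv] using h1
    simpa using this.neg
  have key := integral_Ioi_of_hasDerivAt_of_tendsto' hderiv
    ((IOn_ek ht 2).add ((IOn_ek ht 3).const_mul 2)) htend
  rw [integral_add (IOn_ek ht 2) ((IOn_ek ht 3).const_mul 2), MeasureTheory.integral_const_mul] at key
  linarith [key]

lemma J_nonneg {t : ℝ} (ht : 0 < t) : 0 ≤ ∫ y in Set.Ioi t, Real.exp (-y) / y ^ 3 := by
  apply setIntegral_nonneg measurableSet_Ioi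
  intro y hy
  have : 0 < y := lt_trans ht hy
  positivity

lemma J_le {t : ℝ} (ht : 0 < t) :
    ∫ y in Set.Ioi t, Real.exp (-y) / y ^ 3 ≤ Real.exp (-t) / t ^ 3 := by
  have h1 : ∫ y in Set.Ioi t, Real.exp (-y) / y ^ 3
      ≤ ∫ y in Set.Ioi t, Real.exp (-y) / t ^ 3 := by
    apply setIntegral_mono_on (IOn_ek ht 3) _ measurableSet_Ioi
    · intro y hy
      have hy0 : 0 < y := lt_trans ht hy
      apply div_le_div_of_nonneg_left (Real.exp_pos _).le (by positivity)
      exact pow_le_pow_left₀ ht.le (le_of_lt hy) 3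
    · have := (exp_neg_integrableOn_Ioi t (b := 1) one_pos)
      simpa [neg_mul, one_mul, IntegrableOn] using this.div_const (t ^ 3)
  rw [MeasureTheory.integral_div, integral_exp_neg_Ioi] at h1
  exact h1

-- integrability of log near 0
lemma log_integrable01 : IntegrableOn Real.log (Set.Ioc (0:ℝ) 1) := by
  have h : IntegrableOn (fun x => -Real.log x) (Set.Ioc (0:ℝ) 1) := by
    apply intervalIntegral.integrableOn_deriv_of_nonneg
      (g := fun x => x - x * Real.log x)
    · exact (continuous_id.sub Real.continuous_mul_log).continuousOn
    · intro x hx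
      have h1 := (hasDerivAt_id x).sub (Real.hasDerivAt_mul_log hx.1.ne')
      refine h1.congr_deriv ?_
      ring
    · intro x hx
      have := Real.log_nonpos hx.1.le hx.2.le
      linarith
  have heq : Real.log = fun x => -(-Real.log x) := by funext x; ring
  rw [heq]
  exact h.neg

lemma gl_integrable : IntegrableOn (fun x => Real.log x * Real.exp (-x)) (Set.Ioi (0:ℝ)) := by
  rw [← Set.Ioc_union_Ioi_eq_Ioi (zero_le_one)]
  apply IntegrableOn.union
  · apply Integrable.mono' log_integrable01.norm (show Measurable fun x : ℝ => Real.log x * Real.exp (-x) from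
      Real.measurable_log.mul (Real.measurable_exp.comp measurable_neg)).aestronglyMeasurable
    refine (ae_restrict_iff' measurableSet_Ioc).2 (Filter.Eventually.of_forall ?_)
    intro x hx
    rw [norm_mul, Real.norm_eq_abs (Real.exp (-x))]
    rw [abs_of_pos (Real.exp_pos _)]
    calc ‖Real.log x‖ * Real.exp (-x) ≤ ‖Real.log x‖ * 1 := by
          apply mul_le_mul_of_nonneg_left _ (norm_nonneg _)
          exact Real.exp_le_one_iff.2 (by linarith [hx.1])
      _ = ‖Real.log x‖ := mul_one _
  · have hg : IntegrableOn (fun x : ℝ => Real.exp (-x) * x ^ ((2:ℝ) - 1)) (Set.Ioi (0:ℝ)) :=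
      Real.GammaIntegral_convergent (by norm_num)
    apply Integrable.mono' (hg.mono_set (Set.Ioi_subset_Ioi zero_le_one))
      (show Measurable fun x : ℝ => Real.log x * Real.exp (-x) from
      Real.measurable_log.mul (Real.measurable_exp.comp measurable_neg)).aestronglyMeasurable
    refine (ae_restrict_iff' measurableSet_Ioi).2 (Filter.Eventually.of_forall ?_)
    intro x hx
    have hx1 : (1:ℝ) < x := hx
    have hx0 : (0:ℝ) < x := lt_trans one_pos hx1
    have hlog0 : 0 ≤ Real.log x := Real.log_nonneg hx1.le
    rw [norm_mul, Real.norm_eq_abs, Real.norm_eq_abs, abs_of_nonneg hlog0,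
      abs_of_pos (Real.exp_pos _)]
    have hlogx : Real.log x ≤ x := by
      have := Real.log_le_sub_one_of_pos hx0
      linarith
    calc Real.log x * Real.exp (-x) ≤ x * Real.exp (-x) :=
          mul_le_mul_of_nonneg_right hlogx (Real.exp_pos _).le
      _ = Real.exp (-x) * x ^ ((2:ℝ) - 1) := by
          rw [show (2:ℝ) - 1 = 1 by norm_num, Real.rpow_one]; ring

-- limits of primitives at 0⁺
lemma tendsto_prim_left {f : ℝ → ℝ} (hf : IntegrableOn f (Set.Ioc (0:ℝ) 1)) :
    Tendsto (fun s => ∫ x in s..1, f x) (nhdsWithin 0 (Set.Ioi 0))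
      (nhds (∫ x in (0:ℝ)..1, f x)) := by
  have hIcc : IntegrableOn f (Set.uIcc (0:ℝ) 1) := by
    rw [Set.uIcc_of_le zero_le_one, integrableOn_Icc_iff_integrableOn_Ioc]
    exact hf
  have hcont := intervalIntegral.continuousOn_primitive_interval_left (a := 0) (b := 1)
    (μ := volume) hIcc
  rw [Set.uIcc_of_le zero_le_one] at hcont
  have h0 := (hcont 0 (Set.left_mem_Icc.2 zero_le_one)).tendsto
  have heq : nhdsWithin (0:ℝ) (Set.Ioi 0) = nhdsWithin 0 (Set.Ioc 0 1) := by
    rw [nhdsWithin_restrict' (s := Set.Ioi 0) (t := Set.Iic 1) (Iic_mem_nhds one_pos)]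
    congr 1
  rw [heq]
  exact h0.mono_left (nhdsWithin_mono 0 Set.Ioc_subset_Icc_self)

lemma ibp01 : ∫ x in (0:ℝ)..1, Real.log x * Real.exp (-x)
    = -∫ x in (0:ℝ)..1, (1 - Real.exp (-x)) / x := by
  set f : ℝ → ℝ := fun x => Real.log x * Real.exp (-x) with hfdef
  have hfc : ∀ {a b : ℝ}, 0 < a → 0 < b → IntervalIntegrable f volume a b := by
    intro a b ha hb
    apply ContinuousOn.intervalIntegrable
    intro y hy
    have hy0 : 0 < y := by
      rcases Set.mem_uIcc.mp hy with h | h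
      · linarith [h.1]
      · linarith [h.1]
    exact ((Real.continuousAt_log hy0.ne').mul
      (Real.continuous_exp.comp continuous_neg).continuousAt).continuousWithinAt
  have hpc : ∀ {a b : ℝ}, 0 < a → 0 < b →
      IntervalIntegrable (fun x => (1 - Real.exp (-x)) / x) volume a b := by
    intro a b ha hb
    apply ContinuousOn.intervalIntegrable
    intro y hy
    have hy0 : 0 < y := by
      rcases Set.mem_uIcc.mp hy with h | h
      · linarith [h.1]
      · linarith [h.1]
    exact (ContinuousAt.div (by fun_prop) continuousAt_id hy0.ne').continuousWithinAt
  have key : ∀ s : ℝ, 0 < s →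
      (∫ x in s..(1:ℝ), f x) + (∫ x in s..(1:ℝ), (1 - Real.exp (-x)) / x)
        + (1 - Real.exp (-s)) * Real.log s = 0 := by
    have hF : ∀ u, 0 < u → HasDerivAt (fun s => (∫ x in s..(1:ℝ), f x)
        + (∫ x in s..(1:ℝ), (1 - Real.exp (-x)) / x)
        + (1 - Real.exp (-s)) * Real.log s) ((fun _ => (0:ℝ)) u) u := by
      intro u hu
      have hU : HasDerivAt (fun s => ∫ x in s..(1:ℝ), f x) (-f u) u := by
        have h1 : HasDerivAt (fun s => ∫ x in (1:ℝ)..s, f x) (f u) u := by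
          apply intervalIntegral.integral_hasDerivAt_right (hfc one_pos hu)
          · exact ((show Measurable f from
              Real.measurable_log.mul (Real.measurable_exp.comp measurable_neg)).stronglyMeasurable.stronglyMeasurableAtFilter)
          · exact (Real.continuousAt_log hu.ne').mul
              (Real.continuous_exp.comp continuous_neg).continuousAt
        have h2 := h1.neg
        apply h2.congr_of_eventuallyEq
        filter_upwards with s
        rw [intervalIntegral.integral_symm]
        rfl
      have hV : HasDerivAt (fun s => ∫ x in s..(1:ℝ), (1 - Real.exp (-x)) / x)
          (-((1 - Real.exp (-u)) / u)) u := by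
        have h1 : HasDerivAt (fun s => ∫ x in (1:ℝ)..s, (1 - Real.exp (-x)) / x)
            ((1 - Real.exp (-u)) / u) u := by
          apply intervalIntegral.integral_hasDerivAt_right (hpc one_pos hu)
          · exact meas_p.stronglyMeasurable.stronglyMeasurableAtFilter
          · exact ContinuousAt.div (by fun_prop) continuousAt_id hu.ne'
        have h2 := h1.neg
        apply h2.congr_of_eventuallyEq
        filter_upwards with s
        rw [intervalIntegral.integral_symm]
        rfl
      have hW : HasDerivAt (fun s : ℝ => (1 - Real.exp (-s)) * Real.log s)
          (Real.exp (-u) * Real.log u + (1 - Real.exp (-u)) * (1/u)) u := by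
        have he : HasDerivAt (fun s : ℝ => 1 - Real.exp (-s)) (Real.exp (-u)) u := by
          have h1 : HasDerivAt (fun s : ℝ => Real.exp (-s)) (-Real.exp (-u)) u := by
            simpa [Function.comp_def] using (Real.hasDerivAt_exp (-u)).comp u (hasDerivAt_neg u)
          simpa using (h1.const_sub 1)
        have := he.mul (Real.hasDerivAt_log hu.ne')
        rw [one_div]; exact this
      have := (hU.add hV).add hW
      refine this.congr_deriv ?_
      simp only [hfdef]
      field_simp
      ring
    have hG : ∀ u : ℝ, 0 < u → HasDerivAt (fun _ : ℝ => (0:ℝ)) ((fun _ => (0:ℝ)) u) u := by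
      intro u _
      simpa using hasDerivAt_const u (0:ℝ)
    intro s hs
    have := eq_of_deriv_eq_at hF hG (s := 1) (t := s) one_pos hs
    simp only [intervalIntegral.integral_same, Real.log_one, mul_zero, add_zero, zero_add,
      sub_zero] at this
    linarith [this]
  have hU := tendsto_prim_left (f := f) (gl_integrable.mono_set Set.Ioc_subset_Ioi_self)
  have hV := tendsto_prim_left (f := fun x => (1 - Real.exp (-x)) / x)
    ((intervalIntegrable_iff_integrableOn_Ioc_of_le zero_le_one).1 (II_p zero_le_one le_rfl))
  have hW : Tendsto (fun s : ℝ => (1 - Real.exp (-s)) * Real.log s)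
      (nhdsWithin 0 (Set.Ioi 0)) (nhds 0) := by
    have hg : Tendsto (fun s : ℝ => ‖s * Real.log s‖) (nhdsWithin 0 (Set.Ioi 0)) (nhds 0) := by
      have h1 := (Real.continuous_mul_log.tendsto 0).mono_left
        (nhdsWithin_le_nhds (s := Set.Ioi (0:ℝ)))
      simpa using h1.norm
    apply squeeze_zero_norm' _ hg
    filter_upwards [self_mem_nhdsWithin] with s hs
    have hs0 : (0:ℝ) < s := hs
    have h1 : 0 ≤ 1 - Real.exp (-s) := by
      have : Real.exp (-s) ≤ 1 := Real.exp_le_one_iff.2 (by linarith)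
      linarith
    have h2 : 1 - Real.exp (-s) ≤ s := one_sub_exp_le s
    rw [norm_mul, norm_mul]
    apply mul_le_mul_of_nonneg_right _ (norm_nonneg _)
    rw [Real.norm_of_nonneg h1, Real.norm_of_nonneg hs0.le]
    exact h2
  have hsum := (hU.add hV).add hW
  rw [add_zero] at hsum
  have hzero : Tendsto (fun s : ℝ => (∫ x in s..(1:ℝ), f x)
      + (∫ x in s..(1:ℝ), (1 - Real.exp (-x)) / x)
      + (1 - Real.exp (-s)) * Real.log s) (nhdsWithin 0 (Set.Ioi 0)) (nhds 0) := by
    apply Tendsto.congr' _ (tendsto_const_nhds (α := ℝ))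
    filter_upwards [self_mem_nhdsWithin] with s hs
    exact (key s hs).symm
  have := tendsto_nhds_unique hsum hzero
  linarith [this]

lemma ibp1inf : ∫ x in Set.Ioi (1:ℝ), Real.log x * Real.exp (-x) = Ee 1 := by
  have hderiv : ∀ x ∈ Set.Ici (1:ℝ), HasDerivAt (fun y => -(Real.exp (-y) * Real.log y))
      (Real.log x * Real.exp (-x) - Real.exp (-x) / x) x := by
    intro x hx
    have hx0 : (0:ℝ) < x := lt_of_lt_of_le one_pos hx
    have h1 : HasDerivAt (fun y : ℝ => Real.exp (-y)) (-Real.exp (-x)) x := by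
      simpa [Function.comp_def] using (Real.hasDerivAt_exp (-x)).comp x (hasDerivAt_neg x)
    have h2 := (h1.mul (Real.hasDerivAt_log hx0.ne')).neg
    refine h2.congr_deriv ?_
    field_simp
    ring
  have hint : IntegrableOn (fun x => Real.log x * Real.exp (-x) - Real.exp (-x) / x)
      (Set.Ioi (1:ℝ)) :=
    (gl_integrable.mono_set (Set.Ioi_subset_Ioi zero_le_one)).sub (IOn_e1 one_pos)
  have htend : Tendsto (fun y => -(Real.exp (-y) * Real.log y)) atTop (nhds 0) := by
    apply squeeze_zero_norm' _ (tendsto_pow_mul_exp_neg_atTop_nhds_zero 1)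
    filter_upwards [eventually_ge_atTop (1:ℝ)] with y hy
    have hy0 : (0:ℝ) < y := lt_of_lt_of_le one_pos hy
    have hlog0 : 0 ≤ Real.log y := Real.log_nonneg hy
    have hlogy : Real.log y ≤ y := by
      have := Real.log_le_sub_one_of_pos hy0
      linarith
    rw [norm_neg, Real.norm_of_nonneg (by positivity)]
    calc Real.exp (-y) * Real.log y ≤ Real.exp (-y) * y :=
          mul_le_mul_of_nonneg_left hlogy (Real.exp_pos _).le
      _ = y ^ 1 * Real.exp (-y) := by ring
  have key := integral_Ioi_of_hasDerivAt_of_tendsto' hderiv hint htend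
  rw [integral_sub (gl_integrable.mono_set (Set.Ioi_subset_Ioi zero_le_one)) (IOn_e1 one_pos)]
    at key
  have hEe : Ee 1 = ∫ y in Set.Ioi (1:ℝ), Real.exp (-y) / y := rfl
  rw [hEe]
  simp only [Real.log_one, mul_zero, neg_zero, sub_zero, zero_sub, neg_neg] at key
  linarith [key]

lemma gamma_int : ∫ x in Set.Ioi (0:ℝ), Real.log x * Real.exp (-x)
    = -Real.eulerMascheroniConstant := by
  set I : ℝ := ∫ x in Set.Ioi (0:ℝ), Real.log x * Real.exp (-x) with hI
  have h1 : HasDerivAt Complex.GammaIntegral ((I : ℝ) : ℂ) 1 := by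
    have h0 := Complex.hasDerivAt_GammaIntegral (s := 1) (by norm_num)
    convert h0 using 1
    have hcast : ((∫ x in Set.Ioi (0:ℝ), Real.log x * Real.exp (-x) : ℝ) : ℂ)
        = ∫ x in Set.Ioi (0:ℝ), ((Real.log x * Real.exp (-x) : ℝ) : ℂ) :=
      (_root_.integral_ofReal (𝕜 := ℂ)).symm
    rw [hI, hcast]
    apply setIntegral_congr_fun measurableSet_Ioi
    intro t ht
    simp only []
    have h1 : (t:ℂ) ^ ((1:ℂ) - 1) = 1 := by
      rw [sub_self, Complex.cpow_zero]
    rw [h1, one_mul]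
    push_cast
    ring
  have h2 : Complex.Gamma =ᶠ[nhds (1:ℂ)] Complex.GammaIntegral := by
    have hopen : IsOpen {s : ℂ | 0 < s.re} := isOpen_lt continuous_const Complex.continuous_re
    filter_upwards [hopen.mem_nhds (by norm_num : (0:ℝ) < (1:ℂ).re)] with s hs
    exact Complex.Gamma_eq_integral hs
  have h3 : HasDerivAt Complex.Gamma ((I : ℝ) : ℂ) 1 := h1.congr_of_eventuallyEq h2
  have h3' : HasDerivAt Complex.Gamma ((I : ℝ) : ℂ) ((1:ℝ) : ℂ) := by
    rwa [Complex.ofReal_one]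
  have h4 := h3'.real_of_complex
  have h5 : (fun x : ℝ => (Complex.Gamma (x : ℂ)).re) = Real.Gamma := by
    funext x
    rw [Complex.Gamma_ofReal, Complex.ofReal_re]
  rw [h5] at h4
  have h6 := Real.hasDerivAt_Gamma_one
  have h7 := h4.unique h6
  simpa using h7

lemma cst_eq : cst = Real.eulerMascheroniConstant := by
  have hsplit : ∫ x in Set.Ioi (0:ℝ), Real.log x * Real.exp (-x)
      = (∫ x in (0:ℝ)..1, Real.log x * Real.exp (-x))
        + ∫ x in Set.Ioi (1:ℝ), Real.log x * Real.exp (-x) := by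
    rw [intervalIntegral.integral_of_le zero_le_one,
      ← setIntegral_union (Set.Ioc_disjoint_Ioi le_rfl) measurableSet_Ioi
        (gl_integrable.mono_set Set.Ioc_subset_Ioi_self)
        (gl_integrable.mono_set (Set.Ioi_subset_Ioi zero_le_one)),
      Set.Ioc_union_Ioi_eq_Ioi zero_le_one]
  have h := gamma_int
  rw [hsplit, ibp01, ibp1inf] at h
  rw [cst]
  linarith [h]

set_option maxHeartbeats 1000000 in
theorem poissonized_mean_asymptotics :
    (fun t : ℝ =>
        (2 * ∫ y in (0:ℝ)..t, (t - y) * (Real.exp (-y) - 1 + y) / y ^ 2)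
        - (2 * t * Real.log t - (4 - 2 * Real.eulerMascheroniConstant) * t
            + 2 * Real.log t + (2 * Real.eulerMascheroniConstant + 2)))
      =O[atTop] (fun t : ℝ => Real.exp (-t) * t ^ (-2 : ℝ)) := by
  rw [Asymptotics.isBigO_iff]
  refine ⟨10, ?_⟩
  filter_upwards [eventually_ge_atTop (1:ℝ)] with t ht
  have ht0 : (0:ℝ) < t := lt_of_lt_of_le one_pos ht
  have hfe := f_eq ht0
  rw [cst_eq] at hfe
  have hE := E_ibp1 ht0
  have hE2 := E_ibp2 ht0
  set J := ∫ y in Set.Ioi t, Real.exp (-y) / y ^ 3 with hJ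
  have hJ0 := J_nonneg ht0
  have hJ1 := J_le ht0
  have hmain : (2 * ∫ y in (0:ℝ)..t, (t - y) * (Real.exp (-y) - 1 + y) / y ^ 2)
      - (2 * t * Real.log t - (4 - 2 * Real.eulerMascheroniConstant) * t
        + 2 * Real.log t + (2 * Real.eulerMascheroniConstant + 2))
      = 2 * (t + 1) * Ee t - 2 * Real.exp (-t) := by
    rw [hfe]; ring
  have herr : 2 * (t + 1) * Ee t - 2 * Real.exp (-t)
      = -2 * Real.exp (-t) / t ^ 2 + 4 * (t + 1) * J := by
    rw [hE, hE2]
    field_simp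
    ring
  have hrpow : t ^ (-2:ℝ) = (t ^ 2)⁻¹ := by
    rw [show (-2:ℝ) = -((2:ℕ):ℝ) by norm_num, Real.rpow_neg ht0.le, Real.rpow_natCast]
  simp only [hmain, herr, hrpow]
  have he : (0:ℝ) < Real.exp (-t) := Real.exp_pos _
  have ht2 : (0:ℝ) < t ^ 2 := by positivity
  have ht3 : (0:ℝ) < t ^ 3 := by positivity
  have hpos : (0:ℝ) < Real.exp (-t) * (t ^ 2)⁻¹ := by positivity
  rw [Real.norm_eq_abs, Real.norm_eq_abs, abs_of_pos hpos, abs_le]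
  have hb1 : 4 * (t + 1) * J ≤ 8 * Real.exp (-t) / t ^ 2 := by
    have h1 : 4 * (t + 1) * J ≤ 4 * (t + 1) * (Real.exp (-t) / t ^ 3) := by
      apply mul_le_mul_of_nonneg_left hJ1 (by linarith)
    have h2 : 4 * (t + 1) * (Real.exp (-t) / t ^ 3) ≤ 8 * Real.exp (-t) / t ^ 2 := by
      rw [mul_div_assoc', div_le_div_iff₀ ht3 ht2]
      nlinarith [mul_nonneg (mul_nonneg he.le ht2.le) (sub_nonneg.mpr ht)]
    linarith
  constructor
  · have : -(10 * (Real.exp (-t) * (t ^ 2)⁻¹)) ≤ -2 * Real.exp (-t) / t ^ 2 := by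
      rw [div_eq_mul_inv, neg_mul]
      have : 2 * (Real.exp (-t) * (t ^ 2)⁻¹) ≤ 10 * (Real.exp (-t) * (t ^ 2)⁻¹) := by
        apply mul_le_mul_of_nonneg_right (by norm_num) (by positivity)
      nlinarith [this]
    nlinarith [hJ0, ht0, this]
  · have h2 : -2 * Real.exp (-t) / t ^ 2 ≤ 0 := by
      apply div_nonpos_of_nonpos_of_nonneg (by linarith) ht2.le
    have h3 : 8 * Real.exp (-t) / t ^ 2 ≤ 10 * (Real.exp (-t) * (t ^ 2)⁻¹) := by
      rw [div_eq_mul_inv]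
      nlinarith [mul_pos he (inv_pos.2 ht2)]
    linarith
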